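/- Let m, n be natural numbers with n ≥ 1 and let c, c' : Fin m → ℕ be two histograms with Σ_i c i = Σ_i c' i = n that are adjacent in the replacement sense: there exist indices j1 ≠ j2 with c' j1 = c j1 + 1, c j2 ≥ 1, c' j2 = c j2 − 1, and c' i = c i for all i ∉ {j1, j2}. Then |H(c) − H(c')| ≤ (1/n)·(2 + 1/ln 2 + 2·log₂ n). -/

import Mathlib

open Finset

/-- Base-2 Shannon entropy of a histogram `c : Fin m → ℕ` with total count `n`,
with the convention `0 · log₂ 0 = 0` (automatic since `Real.logb 2 0 = 0`). -/
noncomputable def shannonEntropy {m : ℕ} (n : ℕ) (c : Fin m → ℕ) : ℝ :=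
  -∑ i, ((c i : ℝ) / n) * Real.logb 2 ((c i : ℝ) / n)

noncomputable def Fent (k : ℕ) : ℝ := (k : ℝ) * Real.logb 2 (k : ℝ)

lemma Fent_diff_nonneg (k : ℕ) : 0 ≤ Fent (k + 1) - Fent k := by
  unfold Fent
  rcases Nat.eq_zero_or_pos k with h | h
  · subst h; simp
  · have h1 : (1:ℝ) ≤ (k:ℝ) := by exact_mod_cast h
    have hk : (0:ℝ) < (k:ℝ) := by linarith
    have hlog : Real.logb 2 (k:ℝ) ≤ Real.logb 2 ((k:ℝ)+1) :=
      Real.logb_le_logb_of_le (by norm_num) hk (by linarith)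
    have hlognn : 0 ≤ Real.logb 2 (k:ℝ) := Real.logb_nonneg (by norm_num) h1
    push_cast
    nlinarith

lemma Fent_diff_le (k : ℕ) :
    Fent (k + 1) - Fent k ≤ Real.logb 2 ((k:ℝ) + 1) + 1 / Real.log 2 := by
  have hl2 : (0:ℝ) < Real.log 2 := Real.log_pos (by norm_num)
  unfold Fent
  rcases Nat.eq_zero_or_pos k with h | h
  · subst h; simp; positivity
  · have hk : (0:ℝ) < (k:ℝ) := by exact_mod_cast h
    have hlb : Real.logb 2 ((k:ℝ)+1) - Real.logb 2 (k:ℝ)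
        = Real.log (((k:ℝ)+1)/(k:ℝ)) / Real.log 2 := by
      rw [Real.logb, Real.logb, Real.log_div (by linarith) (ne_of_gt hk)]
      ring
    have hle : Real.log (((k:ℝ)+1)/(k:ℝ)) ≤ 1 / (k:ℝ) := by
      have h1 := Real.log_le_sub_one_of_pos (show (0:ℝ) < ((k:ℝ)+1)/(k:ℝ) by positivity)
      have h2 : ((k:ℝ)+1)/(k:ℝ) - 1 = 1/(k:ℝ) := by field_simp; ring
      linarith
    have hnum : (k:ℝ) * Real.log (((k:ℝ)+1)/(k:ℝ)) ≤ 1 := by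
      have := mul_le_mul_of_nonneg_left hle (le_of_lt hk)
      have h1k : (k:ℝ) * (1/(k:ℝ)) = 1 := by field_simp
      linarith
    have key : (k:ℝ) * (Real.logb 2 ((k:ℝ)+1) - Real.logb 2 (k:ℝ)) ≤ 1 / Real.log 2 := by
      rw [hlb, mul_div_assoc']
      gcongr
    push_cast
    nlinarith

lemma entropy_eq {m : ℕ} (n : ℕ) (hn : 1 ≤ n) (c : Fin m → ℕ) (hc : ∑ i, c i = n) :
    shannonEntropy n c = Real.logb 2 (n:ℝ) - (1/(n:ℝ)) * ∑ i, Fent (c i) := by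
  have hn0 : (0:ℝ) < (n:ℝ) := by exact_mod_cast hn
  unfold shannonEntropy Fent
  have hterm : ∀ i : Fin m, ((c i : ℝ)/(n:ℝ)) * Real.logb 2 ((c i:ℝ)/(n:ℝ))
      = (c i : ℝ) * Real.logb 2 (c i : ℝ) / n - ((c i:ℝ)/(n:ℝ)) * Real.logb 2 (n:ℝ) := by
    intro i
    rcases Nat.eq_zero_or_pos (c i) with h | h
    · simp [h]
    · have hci : (0:ℝ) < (c i : ℝ) := by exact_mod_cast h
      rw [Real.logb_div (ne_of_gt hci) (ne_of_gt hn0)]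
      ring
  rw [Finset.sum_congr rfl (fun i _ => hterm i), Finset.sum_sub_distrib]
  have hsum : ∑ i, ((c i : ℝ)) = (n:ℝ) := by
    rw [← Nat.cast_sum, hc]
  have h2 : ∑ i, ((c i:ℝ)/(n:ℝ)) * Real.logb 2 (n:ℝ)
      = Real.logb 2 (n:ℝ) := by
    rw [← Finset.sum_mul, ← Finset.sum_div, hsum, div_self (ne_of_gt hn0), one_mul]
  rw [h2, ← Finset.sum_div]
  ring

/-- Shannon entropy sensitivity under replacement adjacency:
for adjacent histograms of total `n`, `|H(c) − H(c')| ≤ (1/n)(2 + 1/ln 2 + 2 log₂ n)`. -/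
theorem shannon_entropy_sensitivity
    {m : ℕ} (n : ℕ) (hn : 1 ≤ n) (c c' : Fin m → ℕ)
    (hc : ∑ i, c i = n) (hc' : ∑ i, c' i = n)
    (j1 j2 : Fin m) (hj : j1 ≠ j2)
    (h1 : c' j1 = c j1 + 1)
    (h2pos : 1 ≤ c j2) (h2 : c' j2 = c j2 - 1)
    (hother : ∀ i, i ≠ j1 → i ≠ j2 → c' i = c i) :
    |shannonEntropy n c - shannonEntropy n c'| ≤
      (1 / (n : ℝ)) * (2 + 1 / Real.log 2 + 2 * Real.logb 2 (n : ℝ)) := by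
  have hn0 : (0:ℝ) < (n:ℝ) := by exact_mod_cast hn
  have hl2 : (0:ℝ) < Real.log 2 := Real.log_pos (by norm_num)
  have hlogn : 0 ≤ Real.logb 2 (n:ℝ) := Real.logb_nonneg (by norm_num) (by exact_mod_cast hn)
  set a := c j1 with ha
  set b := c j2 with hb
  -- rewrite entropies
  rw [entropy_eq n hn c hc, entropy_eq n hn c' hc']
  have hdiff : (Real.logb 2 (n:ℝ) - (1/(n:ℝ)) * ∑ i, Fent (c i))
      - (Real.logb 2 (n:ℝ) - (1/(n:ℝ)) * ∑ i, Fent (c' i))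
      = (1/(n:ℝ)) * (∑ i, (Fent (c' i) - Fent (c i))) := by
    rw [Finset.sum_sub_distrib]; ring
  rw [hdiff]
  -- collapse the sum to two terms
  have hsum2 : (∑ i, (Fent (c' i) - Fent (c i)))
      = (Fent (c' j1) - Fent (c j1)) + (Fent (c' j2) - Fent (c j2)) := by
    rw [← Finset.sum_pair (f := fun i => Fent (c' i) - Fent (c i)) hj]
    apply (Finset.sum_subset (Finset.subset_univ _) ?_).symm
    intro i _ hi
    simp only [Finset.mem_insert, Finset.mem_singleton, not_or] at hi
    rw [hother i hi.1 hi.2, sub_self]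
  rw [hsum2, h1, h2]
  -- bounds on the two increments
  have hb1 : b - 1 + 1 = b := Nat.succ_pred_eq_of_pos h2pos
  have ha_le : a + 1 ≤ n := by
    have : c' j1 ≤ ∑ i, c' i := Finset.single_le_sum (fun i _ => Nat.zero_le _) (Finset.mem_univ j1)
    rw [h1, hc'] at this; exact this
  have hb_le : b ≤ n := by
    have : c j2 ≤ ∑ i, c i := Finset.single_le_sum (fun i _ => Nat.zero_le _) (Finset.mem_univ j2)
    rw [hc] at this; exact this
  have hbound : ∀ k : ℕ, k + 1 ≤ n →
      0 ≤ Fent (k+1) - Fent k ∧ Fent (k+1) - Fent k ≤ Real.logb 2 (n:ℝ) + 1 / Real.log 2 := by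
    intro k hk
    refine ⟨Fent_diff_nonneg k, (Fent_diff_le k).trans ?_⟩
    have hle : ((k:ℝ) + 1) ≤ (n:ℝ) := by exact_mod_cast hk
    have := Real.logb_le_logb_of_le (show (1:ℝ) < 2 by norm_num)
      (show (0:ℝ) < (k:ℝ)+1 by positivity) hle
    linarith
  have hD1 := hbound a ha_le
  have hD2 := hbound (b-1) (by omega)
  rw [hb1] at hD2
  have habs : |(Fent (a+1) - Fent a) + (Fent (b-1) - Fent b)|
      ≤ Real.logb 2 (n:ℝ) + 1 / Real.log 2 := by
    rw [abs_le]
    constructor <;> [skip; skip] <;>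
      · obtain ⟨p1, q1⟩ := hD1
        obtain ⟨p2, q2⟩ := hD2
        nlinarith
  rw [abs_mul, abs_of_pos (by positivity : (0:ℝ) < 1/(n:ℝ))]
  apply mul_le_mul_of_nonneg_left ?_ (by positivity)
  calc |(Fent (a+1) - Fent a) + (Fent (b-1) - Fent b)|
      ≤ Real.logb 2 (n:ℝ) + 1 / Real.log 2 := habs
    _ ≤ 2 + 1 / Real.log 2 + 2 * Real.logb 2 (n:ℝ) := by linarith
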